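/- Let Ω₀ and Ω₁ be compact subsets of ℝⁿ, c : Ω₀ × Ω₁ → ℝ be C¹, and φ : Ω₀ → ℝ be c-concave. If x₁ is an interior point of Ω₀ at which φ is differentiable and m ∈ ∂_cφ(x₁), then the function z ↦ φ(z) − c(z,m) attains its maximum over Ω₀ at z = x₁, and consequently ∇φ(x₁) = ∇ₓc(x₁, m). In particular, if in addition y ↦ ∇ₓc(x₁, y) is injective on Ω₁, then ∂_cφ(x₁) is a singleton. -/

import Mathlib

/-- The `c`-transform relative to the domain `Ω₀`:
`u^c(m) = inf_{x ∈ Ω₀} (c(x,m) − u(x))`. -/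
noncomputable def cTransformOn {E : Type*} (Ω₀ : Set E) (c : E → E → ℝ) (u : E → ℝ)
    (m : E) : ℝ :=
  ⨅ x : Ω₀, (c x m - u x)

/-- `φ` is `c`-concave on `Ω₀` (relative to the target `Ω₁`). -/
def CConcaveOn {E : Type*} (Ω₀ Ω₁ : Set E) (c : E → E → ℝ) (φ : E → ℝ) : Prop :=
  ∀ x₀ ∈ Ω₀, ∃ m₀ ∈ Ω₁, ∃ b : ℝ, (∀ x ∈ Ω₀, φ x ≤ c x m₀ - b) ∧ φ x₀ = c x₀ m₀ - b

/-- The `c`-superdifferential `∂_cφ(x) = { m ∈ Ω₁ : φ(x) + φ^c(m) = c(x,m) }`. -/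
noncomputable def cSuperdiffOn {E : Type*} (Ω₀ Ω₁ : Set E) (c : E → E → ℝ) (φ : E → ℝ)
    (x : E) : Set E :=
  {m ∈ Ω₁ | φ x + cTransformOn Ω₀ c φ m = c x m}

/-- If `φ` is `c`-concave, `x₁` is an interior point of `Ω₀` at which `φ` is
differentiable and `m ∈ ∂_cφ(x₁)`, then `z ↦ φ(z) − c(z,m)` attains its maximum over `Ω₀`
at `z = x₁`, hence `∇φ(x₁) = ∇ₓc(x₁,m)`; if moreover `y ↦ ∇ₓc(x₁,y)` is injective on `Ω₁`,
then `∂_cφ(x₁)` is a singleton. -/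
theorem cSuperdiff_singleton_of_differentiable {n : ℕ}
    (Ω₀ Ω₁ : Set (EuclideanSpace ℝ (Fin n)))
    (hΩ₀ : IsCompact Ω₀) (hΩ₁ : IsCompact Ω₁)
    (c : EuclideanSpace ℝ (Fin n) → EuclideanSpace ℝ (Fin n) → ℝ)
    (hc : ContDiff ℝ 1 (Function.uncurry c))
    (φ : EuclideanSpace ℝ (Fin n) → ℝ) (hφ : CConcaveOn Ω₀ Ω₁ c φ)
    (x₁ : EuclideanSpace ℝ (Fin n)) (hx₁ : x₁ ∈ interior Ω₀)
    (hdiff : DifferentiableAt ℝ φ x₁)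
    (m : EuclideanSpace ℝ (Fin n)) (hm : m ∈ cSuperdiffOn Ω₀ Ω₁ c φ x₁) :
    (∀ z ∈ Ω₀, φ z - c z m ≤ φ x₁ - c x₁ m) ∧
    gradient φ x₁ = gradient (fun x' => c x' m) x₁ ∧
    (Set.InjOn (fun y => gradient (fun x' => c x' y) x₁) Ω₁ →
      ∃ m' : EuclideanSpace ℝ (Fin n), cSuperdiffOn Ω₀ Ω₁ c φ x₁ = {m'}) := by
  have hx₁Ω : x₁ ∈ Ω₀ := interior_subset hx₁
  have hccont : Continuous (Function.uncurry c) := hc.continuous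
  -- key claim for any m' in the superdifferential
  have key : ∀ m' ∈ cSuperdiffOn Ω₀ Ω₁ c φ x₁,
      (∀ z ∈ Ω₀, φ z - c z m' ≤ φ x₁ - c x₁ m') ∧
      gradient φ x₁ = gradient (fun x' => c x' m') x₁ := by
    intro m' hm'
    obtain ⟨hm'Ω, heq⟩ := hm'
    -- bounded below
    obtain ⟨m₀, hm₀, b, hb, -⟩ := hφ x₁ hx₁Ω
    have hcont : Continuous fun x => c x m' - c x m₀ + b := by
      have h1 : Continuous fun x => c x m' :=
        hccont.comp (continuous_id.prodMk continuous_const)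
      have h2 : Continuous fun x => c x m₀ :=
        hccont.comp (continuous_id.prodMk continuous_const)
      exact (h1.sub h2).add continuous_const
    obtain ⟨K, hK⟩ := (hΩ₀.image hcont).bddBelow
    have hbdd : BddBelow (Set.range fun x : Ω₀ => c x m' - φ x) := by
      refine ⟨K, ?_⟩
      rintro r ⟨⟨x, hx⟩, rfl⟩
      have h1 : φ x ≤ c x m₀ - b := hb x hx
      have h2 : K ≤ c x m' - c x m₀ + b := hK ⟨x, hx, rfl⟩
      dsimp only
      linarith
    have hmax : ∀ z ∈ Ω₀, φ z - c z m' ≤ φ x₁ - c x₁ m' := by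
      intro z hz
      have hle : cTransformOn Ω₀ c φ m' ≤ c z m' - φ z := ciInf_le hbdd ⟨z, hz⟩
      have : φ x₁ + cTransformOn Ω₀ c φ m' = c x₁ m' := heq
      linarith
    refine ⟨hmax, ?_⟩
    -- differentiability of x ↦ c x m'
    have hdc : DifferentiableAt ℝ (fun x' => c x' m') x₁ := by
      have := (hc.differentiable one_ne_zero) (x₁, m')
      have hin : DifferentiableAt ℝ (fun x : EuclideanSpace ℝ (Fin n) => (x, m')) x₁ :=
        differentiableAt_id.prodMk (differentiableAt_const m')
      exact this.comp x₁ hin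
    -- local max of φ - c(·,m') at x₁
    have hloc : IsLocalMax (fun z => φ z - c z m') x₁ := by
      filter_upwards [mem_interior_iff_mem_nhds.mp hx₁] with z hz
      exact hmax z hz
    have hfd : fderiv ℝ (fun z => φ z - c z m') x₁ = 0 := hloc.fderiv_eq_zero
    have hsub : fderiv ℝ (fun z => φ z - c z m') x₁
        = fderiv ℝ φ x₁ - fderiv ℝ (fun x' => c x' m') x₁ := fderiv_sub hdiff hdc
    have hfe : fderiv ℝ φ x₁ = fderiv ℝ (fun x' => c x' m') x₁ := by
      rw [hfd] at hsub
      exact (sub_eq_zero.mp hsub.symm)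
    simp only [gradient, hfe]
  obtain ⟨h1, h2⟩ := key m hm
  refine ⟨h1, h2, fun hinj => ⟨m, ?_⟩⟩
  ext m''
  simp only [Set.mem_singleton_iff]
  constructor
  · intro hm''
    obtain ⟨-, h2'⟩ := key m'' hm''
    exact hinj hm''.1 hm.1 (by dsimp; rw [← h2', ← h2])
  · rintro rfl; exact hm
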